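/- For every rational number q, the set {x ∈ 𝔈 : x₀ = q} is a nowhere dense C-set in Erdős space 𝔈: it is nowhere dense in 𝔈 and is an intersection of clopen subsets of 𝔈. -/

import Mathlib

open Topology Filter Set

/-- A C-set in a topological space is an intersection of clopen subsets. -/
def IsCSet {X : Type*} [TopologicalSpace X] (C : Set X) : Prop :=
  ∃ 𝒮 : Set (Set X), (∀ s ∈ 𝒮, IsClopen s) ∧ C = ⋂₀ 𝒮

/-- Erdős space: the rational points of the real Hilbert space ℓ². -/
def ErdosSpace : Set (lp (fun _ : ℕ => ℝ) 2) :=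
  {x | ∀ n : ℕ, ∃ q : ℚ, x n = (q : ℝ)}

noncomputable def fE : ↥ErdosSpace → ℝ := fun x => (x : lp (fun _ : ℕ => ℝ) 2) 0

lemma fE_lipschitz : LipschitzWith 1 fE := by
  apply LipschitzWith.of_dist_le_mul
  intro x y
  simp only [NNReal.coe_one, one_mul, Subtype.dist_eq, dist_eq_norm]
  have := lp.norm_apply_le_norm (p := 2) (by norm_num)
    ((x : lp (fun _ : ℕ => ℝ) 2) - (y : lp (fun _ : ℕ => ℝ) 2)) 0
  simpa [fE] using this

lemma fE_continuous : Continuous fE := fE_lipschitz.continuous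

lemma fE_rat (x : ↥ErdosSpace) : ∃ a : ℚ, fE x = (a : ℝ) := x.2 0

lemma clopen_S (q : ℚ) {r : ℝ} (hr : Irrational r) :
    IsClopen {x : ↥ErdosSpace | |fE x - (q : ℝ)| < r} := by
  constructor
  · -- closed
    have : {x : ↥ErdosSpace | |fE x - (q : ℝ)| < r}
        = fE ⁻¹' (Metric.closedBall (q : ℝ) r) := by
      ext x
      obtain ⟨a, ha⟩ := fE_rat x
      simp only [mem_setOf_eq, mem_preimage, Metric.mem_closedBall, Real.dist_eq]
      constructor
      · exact le_of_lt
      · intro h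
        refine lt_of_le_of_ne h ?_
        intro habs
        apply hr
        exact ⟨|a - q|, by rw [← habs, ha]; push_cast; ring_nf⟩
    rw [this]
    exact Metric.isClosed_closedBall.preimage fE_continuous
  · -- open
    have : {x : ↥ErdosSpace | |fE x - (q : ℝ)| < r}
        = fE ⁻¹' (Metric.ball (q : ℝ) r) := by
      ext x; simp [Real.dist_eq]
    rw [this]
    exact (Metric.isOpen_ball).preimage fE_continuous

/-- For every rational `q`, `{x ∈ 𝔈 : x₀ = q}` is a nowhere dense C-set in `𝔈`. -/
theorem stmt11 (q : ℚ) :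
    IsNowhereDense {x : ↥ErdosSpace | (x : lp (fun _ : ℕ => ℝ) 2) 0 = (q : ℝ)} ∧
    IsCSet {x : ↥ErdosSpace | (x : lp (fun _ : ℕ => ℝ) 2) 0 = (q : ℝ)} := by
  set C : Set ↥ErdosSpace := {x : ↥ErdosSpace | (x : lp (fun _ : ℕ => ℝ) 2) 0 = (q : ℝ)} with hC
  have hCf : C = fE ⁻¹' {(q : ℝ)} := rfl
  have hclosed : IsClosed C := by
    rw [hCf]; exact isClosed_singleton.preimage fE_continuous
  constructor
  · rw [hclosed.isNowhereDense_iff]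
    rw [eq_empty_iff_forall_notMem]
    intro x hx
    obtain ⟨ε, hε, hball⟩ := Metric.mem_nhds_iff.mp (mem_interior_iff_mem_nhds.mp hx)
    obtain ⟨δ, hδ0, hδε⟩ := exists_rat_btwn hε
    have hδ0' : (0 : ℝ) < (δ : ℝ) := hδ0
    have hy0mem : (x : lp (fun _ : ℕ => ℝ) 2) + lp.single 2 0 ((δ : ℝ)) ∈ ErdosSpace := by
      intro n
      obtain ⟨a, ha⟩ := x.2 n
      rcases eq_or_ne n 0 with rfl | hn
      · exact ⟨a + δ, by
          rw [lp.coeFn_add, Pi.add_apply, lp.single_apply_self, ha]; push_cast; ring⟩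
      · exact ⟨a, by
          rw [lp.coeFn_add, Pi.add_apply, lp.single_apply_ne 2 0 _ hn, add_zero, ha]⟩
    have hdist : dist (⟨_, hy0mem⟩ : ↥ErdosSpace) x < ε := by
      rw [Subtype.dist_eq, dist_eq_norm]
      have h1 : ((x : lp (fun _ : ℕ => ℝ) 2) + lp.single 2 0 ((δ : ℝ)))
          - (x : lp (fun _ : ℕ => ℝ) 2) = lp.single 2 0 ((δ : ℝ)) :=
        add_sub_cancel_left _ _
      have h2 : ‖lp.single (E := fun _ : ℕ => ℝ) 2 0 ((δ : ℝ))‖ = ‖(δ : ℝ)‖ :=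
        lp.norm_single (by norm_num) _ _
      rw [h1, h2, Real.norm_eq_abs, abs_of_pos hδ0']
      exact hδε
    have hyC : (⟨_, hy0mem⟩ : ↥ErdosSpace) ∈ C := hball (Metric.mem_ball.mpr hdist)
    have hxC : x ∈ C := interior_subset hx
    have hy' : (((x : lp (fun _ : ℕ => ℝ) 2) + lp.single 2 0 ((δ : ℝ)) : lp (fun _ : ℕ => ℝ) 2) : ℕ → ℝ) 0 = (q : ℝ) := hyC
    have hx0 : (x : lp (fun _ : ℕ => ℝ) 2) 0 = (q : ℝ) := hxC
    rw [lp.coeFn_add, Pi.add_apply, lp.single_apply_self, hx0] at hy'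
    linarith
  · refine ⟨{S | ∃ r : ℝ, Irrational r ∧ 0 < r ∧
      S = {x : ↥ErdosSpace | |fE x - (q : ℝ)| < r}}, ?_, ?_⟩
    · rintro S ⟨r, hr, _, rfl⟩
      exact clopen_S q hr
    · ext x
      simp only [mem_sInter, mem_setOf_eq, hC]
      constructor
      · rintro hx S ⟨r, hr, hr0, rfl⟩
        simp only [mem_setOf_eq, fE, hx, sub_self, abs_zero]
        exact hr0
      · intro hx
        by_contra h
        have h0 : 0 < |fE x - (q : ℝ)| := abs_pos.mpr (sub_ne_zero.mpr h)
        obtain ⟨r, hr, hr0, hrlt⟩ := exists_irrational_btwn h0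
        have := hx _ ⟨r, hr, hr0, rfl⟩
        simp only [mem_setOf_eq] at this
        linarith
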